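/- Let G be a Lie group whose Lie algebra 𝔤 carries a tangent grading (W_i)_{i=1}^s with associated dilations δ_ε. Define for ε ≠ 0 the bracket ⟦x,y⟧^{(ε)} := δ_ε^{-1}[δ_ε x, δ_ε y]. Then (ε, x, y) ↦ ⟦x,y⟧^{(ε)} is polynomial in ε, hence extends to ε = 0, and the extension ⟦·,·⟧^{(0)} satisfies ⟦w,z⟧^{(0)} = ([w,z])_{i+j} for w ∈ W_i, z ∈ W_j, where (·)_k is the projection onto W_k. -/

import Mathlib

/-- The span of brackets `⁅a,b⁆` with `a ∈ A`, `b ∈ B`. -/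
def sbr {L : Type*} [LieRing L] [LieAlgebra ℝ L] (A B : Submodule ℝ L) : Submodule ℝ L :=
  Submodule.span ℝ {x : L | ∃ a ∈ A, ∃ b ∈ B, x = ⁅a, b⁆}

/-- `Δpow Δ k = Δ^k`, the left-iterated bracket `[Δ,…,Δ]` (`k` factors); `Δ^0 := ⊥`. -/
def Δpow {L : Type*} [LieRing L] [LieAlgebra ℝ L] (Δ : Submodule ℝ L) : ℕ → Submodule ℝ L
  | 0 => ⊥
  | 1 => Δ
  | (k+2) => sbr Δ (Δpow Δ (k+1))

/-- `ΔB Δ j = Δ^{[j]} = Σ_{i=1}^j Δ^i`. -/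
def ΔB {L : Type*} [LieRing L] [LieAlgebra ℝ L] (Δ : Submodule ℝ L) (j : ℕ) : Submodule ℝ L :=
  ⨆ i ∈ Finset.Icc 1 j, Δpow Δ i

/-- Lower central series, indexed so that `lcs L 1 = 𝔤`, `lcs L (j+1) = [𝔤, lcs L j]`. -/
def lcs (L : Type*) [LieRing L] [LieAlgebra ℝ L] : ℕ → Submodule ℝ L
  | 0 => ⊤
  | 1 => ⊤
  | (j+2) => sbr ⊤ (lcs L (j+1))


/-- for a tangent grading `(W i)_{i=1}^s` with dilations `δ ε`, the rescaled
brackets `⟦x,y⟧^{(ε)} = δ_ε⁻¹ ⁅δ_ε x, δ_ε y⁆` (for `ε ≠ 0`) extend polynomially to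
`ε = 0`, and the value at `0` is the graded bracket: `⟦w,z⟧^{(0)} = (⁅w,z⁆)_{i+j}` for
`w ∈ W i`, `z ∈ W j`, where `π k` is the projection onto `W k`. -/
theorem Δpow_bracket {L : Type*} [LieRing L] [LieAlgebra ℝ L] (Δ : Submodule ℝ L) :
    ∀ a b (x y : L), x ∈ Δpow Δ a → y ∈ Δpow Δ b → ⁅x, y⁆ ∈ Δpow Δ (a + b) := by
  intro a
  induction a using Nat.strong_induction_on with
  | _ a ih =>
    match a with
    | 0 =>
      intro b x y hx hy
      rw [show x = 0 by simpa [Δpow] using hx]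
      simp
    | 1 =>
      intro b x y hx hy
      match b with
      | 0 =>
        rw [show y = 0 by simpa [Δpow] using hy]; simp
      | b'+1 =>
        rw [show 1 + (b'+1) = b'+2 by omega]
        exact Submodule.subset_span ⟨x, hx, y, hy, rfl⟩
    | k+2 =>
      intro b x y hx hy
      induction hx using Submodule.span_induction with
      | mem v hv =>
        obtain ⟨d, hd, u, hu, rfl⟩ := hv
        rw [lie_lie]
        refine sub_mem ?_ ?_
        · have h1 : ⁅u, y⁆ ∈ Δpow Δ (k+1+b) := ih (k+1) (by omega) b u y hu hy
          have h2 := ih 1 (by omega) (k+1+b) d ⁅u,y⁆ hd h1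
          rwa [show 1 + (k+1+b) = k+2+b by omega] at h2
        · have h1 : ⁅d, y⁆ ∈ Δpow Δ (1+b) := ih 1 (by omega) b d y hd hy
          have h2 := ih (k+1) (by omega) (1+b) u ⁅d,y⁆ hu h1
          rwa [show k+1+(1+b) = k+2+b by omega] at h2
      | zero => simp
      | add v w _ _ hv hw => rw [add_lie]; exact add_mem hv hw
      | smul c v _ hv => rw [smul_lie]; exact Submodule.smul_mem _ c hv

theorem ΔB_mono {L : Type*} [LieRing L] [LieAlgebra ℝ L] (Δ : Submodule ℝ L) {a b : ℕ}
    (h : a ≤ b) : ΔB Δ a ≤ ΔB Δ b := by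
  apply biSup_mono
  intro i hi
  simp only [Finset.mem_Icc] at *
  omega

theorem Δpow_le_ΔB {L : Type*} [LieRing L] [LieAlgebra ℝ L] (Δ : Submodule ℝ L) {i a : ℕ}
    (h : i ∈ Finset.Icc 1 a) : Δpow Δ i ≤ ΔB Δ a := le_biSup _ h

theorem ΔB_bracket {L : Type*} [LieRing L] [LieAlgebra ℝ L] (Δ : Submodule ℝ L) :
    ∀ a b (x y : L), x ∈ ΔB Δ a → y ∈ ΔB Δ b → ⁅x, y⁆ ∈ ΔB Δ (a + b) := by
  intro a b x y hx hy
  refine Submodule.iSup_induction (x := x)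
    (fun i => ⨆ (_ : i ∈ Finset.Icc 1 a), Δpow Δ i)
    (motive := fun x => ⁅x, y⁆ ∈ ΔB Δ (a + b)) hx ?_ (by simp) ?_
  · intro i v hv
    by_cases hi : i ∈ Finset.Icc 1 a
    · simp only [iSup_pos hi] at hv
      refine Submodule.iSup_induction (x := y)
        (fun j => ⨆ (_ : j ∈ Finset.Icc 1 b), Δpow Δ j)
        (motive := fun y => ⁅v, y⁆ ∈ ΔB Δ (a + b)) hy ?_ (by simp) ?_
      · intro j w hw
        by_cases hj : j ∈ Finset.Icc 1 b
        · simp only [iSup_pos hj] at hw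
          refine Δpow_le_ΔB Δ ?_ (Δpow_bracket Δ i j v w hv hw)
          simp only [Finset.mem_Icc] at *
          omega
        · simp only [iSup_neg hj, Submodule.mem_bot] at hw
          subst hw; simp
      · intro y1 y2 h1 h2
        rw [lie_add]; exact add_mem h1 h2
    · simp only [iSup_neg hi, Submodule.mem_bot] at hv
      subst hv; simp
  · intro x1 x2 h1 h2
    rw [add_lie]; exact add_mem h1 h2

theorem sum_lie' {L : Type*} [LieRing L] {ι : Type*} (t : Finset ι) (f : ι → L) (y : L) :
    ⁅∑ i ∈ t, f i, y⁆ = ∑ i ∈ t, ⁅f i, y⁆ := by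
  induction t using Finset.cons_induction with
  | empty => simp
  | cons a t ha ih => simp [add_lie, ih]

theorem lie_sum' {L : Type*} [LieRing L] {ι : Type*} (t : Finset ι) (x : L) (f : ι → L) :
    ⁅x, ∑ i ∈ t, f i⁆ = ∑ i ∈ t, ⁅x, f i⁆ := by
  induction t using Finset.cons_induction with
  | empty => simp
  | cons a t ha ih => simp [lie_add, ih]

theorem stmt8 {L : Type*} [LieRing L] [LieAlgebra ℝ L] [FiniteDimensional ℝ L]
    (s : ℕ) (hs : 1 ≤ s) (Δ : Submodule ℝ L)
    (W : ℕ → Submodule ℝ L)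
    (hW0 : ∀ j, j ∉ Finset.Icc 1 s → W j = ⊥)
    (hgrad : ∀ j ∈ Finset.Icc 1 s,
      ΔB Δ j = W j ⊔ ΔB Δ (j-1) ∧ W j ⊓ ΔB Δ (j-1) = ⊥)
    (hbg : ΔB Δ s = ⊤)
    (δ : ℝ → L →ₗ[ℝ] L)
    (hδ : ∀ (ε : ℝ), ∀ j ∈ Finset.Icc 1 s, ∀ x ∈ W j, δ ε x = ε ^ j • x)
    (π : ℕ → L →ₗ[ℝ] L)
    (hπmem : ∀ j x, π j x ∈ W j)
    (hπsum : ∀ x : L, (∑ j ∈ Finset.Icc 1 s, π j x) = x)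
    (hπid : ∀ j, ∀ x ∈ W j, π j x = x) :
    ∃ B : ℝ → L →ₗ[ℝ] L →ₗ[ℝ] L,
      (∀ ε : ℝ, ε ≠ 0 → ∀ x y : L, B ε x y = δ (1/ε) ⁅δ ε x, δ ε y⁆) ∧
      (∀ x y : L, ∃ (N : ℕ) (c : ℕ → L),
        ∀ ε : ℝ, B ε x y = ∑ i ∈ Finset.range N, ε ^ i • c i) ∧
      (∀ i ∈ Finset.Icc 1 s, ∀ j ∈ Finset.Icc 1 s, ∀ w ∈ W i, ∀ z ∈ W j,
        B 0 w z = π (i + j) ⁅w, z⁆) := by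
  -- W j ≤ ΔB Δ j for j ∈ Icc 1 s
  have hWle : ∀ j ∈ Finset.Icc 1 s, W j ≤ ΔB Δ j := by
    intro j hj
    rw [(hgrad j hj).1]
    exact le_sup_left
  -- ΔB Δ m = ⨆ j ∈ Icc 1 m, W j for m ≤ s
  have hΔBW : ∀ m, m ≤ s → ΔB Δ m = ⨆ j ∈ Finset.Icc 1 m, W j := by
    intro m
    induction m with
    | zero => intro _; simp [ΔB]
    | succ m ihm =>
      intro hm
      have hmem : m + 1 ∈ Finset.Icc 1 s := by simp; omega
      have h1 := (hgrad (m+1) hmem).1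
      simp only [Nat.add_sub_cancel] at h1
      rw [h1, ihm (by omega)]
      rw [show Finset.Icc 1 (m+1) = insert (m+1) (Finset.Icc 1 m) by
        ext t; simp only [Finset.mem_Icc, Finset.mem_insert]; omega]
      rw [Finset.iSup_insert]
  -- independence
  have hind : ∀ m, m ≤ s → ∀ v : ℕ → L, (∀ j, v j ∈ W j) →
      (∑ j ∈ Finset.Icc 1 m, v j) = 0 → ∀ j ∈ Finset.Icc 1 m, v j = 0 := by
    intro m
    induction m with
    | zero => intro _ v _ _ j hj; simp at hj
    | succ m ihm =>
      intro hm v hv hsum j hj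
      have hins : Finset.Icc 1 (m+1) = insert (m+1) (Finset.Icc 1 m) := by
        ext t; simp only [Finset.mem_Icc, Finset.mem_insert]; omega
      have hnot : (m+1) ∉ Finset.Icc 1 m := by simp
      rw [hins, Finset.sum_insert hnot] at hsum
      have hS : (∑ j ∈ Finset.Icc 1 m, v j) ∈ ΔB Δ m := by
        refine Submodule.sum_mem _ fun j hj => ?_
        simp only [Finset.mem_Icc] at hj
        exact ΔB_mono Δ hj.2 (hWle j (by simp; omega) (hv j))
      have hv1 : v (m+1) = 0 := by
        have h2 := (hgrad (m+1) (by simp; omega)).2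
        simp only [Nat.add_sub_cancel] at h2
        have : v (m+1) ∈ W (m+1) ⊓ ΔB Δ m := by
          refine ⟨hv (m+1), ?_⟩
          rw [eq_neg_of_add_eq_zero_left hsum]; exact neg_mem hS
        rw [h2] at this
        simpa using this
      rw [hins, Finset.mem_insert] at hj
      rcases hj with rfl | hj
      · exact hv1
      · refine ihm (by omega) v hv ?_ j hj
        rw [hv1, zero_add] at hsum
        exact hsum
  -- π k vanishes on W j for j ≠ k, k ∈ Icc 1 s
  have hπ0 : ∀ k ∈ Finset.Icc 1 s, ∀ j, j ≠ k → ∀ x ∈ W j, π k x = 0 := by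
    intro k hk j hjk x hx
    by_cases hj : j ∈ Finset.Icc 1 s
    · set v : ℕ → L := fun l => if l = j then π l x - x else π l x with hv
      have hvm : ∀ l, v l ∈ W l := by
        intro l
        simp only [hv]
        split
        · next h => subst h; exact sub_mem (hπmem l x) hx
        · exact hπmem l x
      have hvs : (∑ l ∈ Finset.Icc 1 s, v l) = 0 := by
        have hvl : ∀ l, v l = π l x - (if l = j then x else 0) := by
          intro l; simp only [hv]; split <;> simp
        rw [Finset.sum_congr rfl fun l _ => hvl l, Finset.sum_sub_distrib, hπsum,
          Finset.sum_ite_eq' (Finset.Icc 1 s) j (fun _ => x), if_pos hj, sub_self]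
      have := hind s le_rfl v hvm hvs k hk
      simpa [hv, if_neg (Ne.symm hjk)] using this
    · rw [hW0 j hj] at hx
      rw [show x = 0 by simpa using hx]
      simp
  have hπΔB : ∀ k ∈ Finset.Icc 1 s, ∀ m, m < k → ∀ x ∈ ΔB Δ m, π k x = 0 := by
    intro k hk m hm x hx
    have hks : k ≤ s := (Finset.mem_Icc.1 hk).2
    rw [hΔBW m (by omega)] at hx
    have hle : ⨆ j ∈ Finset.Icc 1 m, W j ≤ LinearMap.ker (π k) := by
      refine iSup₂_le fun j hj => ?_
      intro y hy
      simp only [Finset.mem_Icc] at hj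
      exact LinearMap.mem_ker.2 (hπ0 k hk j (by omega) y hy)
    simpa using hle hx
  have hWbr : ∀ i ∈ Finset.Icc 1 s, ∀ j ∈ Finset.Icc 1 s, ∀ w ∈ W i, ∀ z ∈ W j,
      ∀ k ∈ Finset.Icc 1 s, i + j < k → π k ⁅w, z⁆ = 0 := by
    intro i hi j hj w hw z hz k hk hlt
    exact hπΔB k hk (i+j) hlt ⁅w,z⁆ (ΔB_bracket Δ i j w z (hWle i hi hw) (hWle j hj hz))
  set T : ℕ → ℕ → ℕ → L →ₗ[ℝ] L →ₗ[ℝ] L := fun i j k =>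
    LinearMap.mk₂ ℝ (fun x y => π k ⁅π i x, π j y⁆)
      (fun x x' y => by simp [add_lie])
      (fun c x y => by simp [smul_lie])
      (fun x y y' => by simp [lie_add])
      (fun c x y => by simp [lie_smul]) with hT
  have hBapp : ∀ (ε : ℝ) (x y : L),
      (∑ i ∈ Finset.Icc 1 s, ∑ j ∈ Finset.Icc 1 s, ∑ k ∈ Finset.Icc 1 s,
        ε ^ (i + j - k) • T i j k) x y
      = ∑ i ∈ Finset.Icc 1 s, ∑ j ∈ Finset.Icc 1 s, ∑ k ∈ Finset.Icc 1 s,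
        ε ^ (i + j - k) • π k ⁅π i x, π j y⁆ := by
    intro ε x y
    simp only [hT, LinearMap.coe_sum, Finset.sum_apply, LinearMap.smul_apply,
      LinearMap.mk₂_apply, Finset.sum_apply, LinearMap.smul_apply]
  refine ⟨fun ε => ∑ i ∈ Finset.Icc 1 s, ∑ j ∈ Finset.Icc 1 s, ∑ k ∈ Finset.Icc 1 s,
    ε ^ (i + j - k) • T i j k, ?_, ?_, ?_⟩
  · -- bullet 1
    intro ε hε x y
    rw [hBapp]
    have hδx : δ ε x = ∑ i ∈ Finset.Icc 1 s, ε ^ i • π i x := by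
      conv_lhs => rw [← hπsum x]
      rw [map_sum]
      exact Finset.sum_congr rfl fun i hi => hδ ε i hi (π i x) (hπmem i x)
    have hδy : δ ε y = ∑ j ∈ Finset.Icc 1 s, ε ^ j • π j y := by
      conv_lhs => rw [← hπsum y]
      rw [map_sum]
      exact Finset.sum_congr rfl fun j hj => hδ ε j hj (π j y) (hπmem j y)
    have h1 : ⁅δ ε x, δ ε y⁆ = ∑ i ∈ Finset.Icc 1 s, ∑ j ∈ Finset.Icc 1 s,
        (ε^i * ε^j) • ⁅π i x, π j y⁆ := by
      rw [hδx, hδy, sum_lie']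
      refine Finset.sum_congr rfl fun i hi => ?_
      rw [lie_sum']
      exact Finset.sum_congr rfl fun j hj => by rw [smul_lie, lie_smul, smul_smul]
    rw [h1, map_sum]
    refine Finset.sum_congr rfl fun i hi => ?_
    rw [map_sum]
    refine Finset.sum_congr rfl fun j hj => ?_
    rw [map_smul]
    have hc : δ (1/ε) ⁅π i x, π j y⁆
        = ∑ k ∈ Finset.Icc 1 s, (1/ε)^k • π k ⁅π i x, π j y⁆ := by
      conv_lhs => rw [← hπsum ⁅π i x, π j y⁆]
      rw [map_sum]
      exact Finset.sum_congr rfl fun k hk => hδ (1/ε) k hk _ (hπmem k _)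
    rw [hc, Finset.smul_sum]
    refine Finset.sum_congr rfl fun k hk => ?_
    by_cases hle : k ≤ i + j
    · rw [smul_smul]
      congr 1
      rw [pow_sub₀ ε hε hle, one_div, inv_pow, pow_add]
    · rw [hWbr i hi j hj (π i x) (hπmem i x) (π j y) (hπmem j y) k hk (by omega)]
      simp
  · -- bullet 2
    intro x y
    refine ⟨2*s+1, fun n => ∑ i ∈ Finset.Icc 1 s, ∑ j ∈ Finset.Icc 1 s, ∑ k ∈ Finset.Icc 1 s,
      (if i + j - k = n then π k ⁅π i x, π j y⁆ else 0), fun ε => ?_⟩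
    rw [hBapp, eq_comm]
    simp only [Finset.smul_sum, smul_ite, smul_zero]
    rw [Finset.sum_comm]
    refine Finset.sum_congr rfl fun i hi => ?_
    rw [Finset.sum_comm]
    refine Finset.sum_congr rfl fun j hj => ?_
    rw [Finset.sum_comm]
    refine Finset.sum_congr rfl fun k hk => ?_
    have he : ∀ n, (if i+j-k = n then ε^n • π k ⁅π i x, π j y⁆ else 0)
        = if i+j-k = n then ε^(i+j-k) • π k ⁅π i x, π j y⁆ else 0 := by
      intro n; split
      · next h => rw [h]
      · rfl
    rw [Finset.sum_congr rfl fun n _ => he n,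
      Finset.sum_ite_eq (Finset.range (2*s+1)) (i+j-k), if_pos]
    have h1 := (Finset.mem_Icc.1 hi).2
    have h2 := (Finset.mem_Icc.1 hj).2
    simp only [Finset.mem_range]; omega
  · -- bullet 3
    intro i hi j hj w hw z hz
    rw [hBapp]
    rw [Finset.sum_eq_single i (fun i' hi' hne => by
        rw [hπ0 i' hi' i (Ne.symm hne) w hw]; simp) (fun h => absurd hi h)]
    rw [hπid i w hw]
    rw [Finset.sum_eq_single j (fun j' hj' hne => by
        rw [hπ0 j' hj' j (Ne.symm hne) z hz]; simp) (fun h => absurd hj h)]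
    rw [hπid j z hz]
    by_cases hij : i + j ≤ s
    · rw [Finset.sum_eq_single (i+j) (fun k hk hne => ?_) (fun h => absurd ?_ h)]
      · simp
      · rcases lt_or_gt_of_ne hne with h | h
        · rw [zero_pow (by omega : i + j - k ≠ 0), zero_smul]
        · rw [hWbr i hi j hj w hw z hz k hk h, smul_zero]
      · have h1 := (Finset.mem_Icc.1 hi).1
        simp only [Finset.mem_Icc]
        omega
    · have hz0 : π (i+j) ⁅w,z⁆ = 0 := by
        have hm := hπmem (i+j) ⁅w,z⁆
        rw [hW0 (i+j) (by simp only [Finset.mem_Icc]; omega)] at hm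
        simpa using hm
      rw [hz0]
      refine Finset.sum_eq_zero fun k hk => ?_
      have h1 := (Finset.mem_Icc.1 hk).2
      rw [zero_pow (by omega : i + j - k ≠ 0), zero_smul]
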